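/- Assume X_A and X_B are conditionally independent given Y, the prior is well-defined, and f is a differentiable convex function with f(1)=0 whose derivative f' is injective. If h_A* : Σ_A → Δ_Σ, h_B* : Σ_B → Δ_Σ and p* ∈ Δ_Σ with strictly positive entries satisfy MIG^f(h_A*, h_B*, p*) = MI^f(X_A;X_B), then there exists a permutation π of Σ such that for all x_A, x_B, y: h_A*(x_A)(π(y)) = Pr[Y=y|X_A=x_A], h_B*(x_B)(π(y)) = Pr[Y=y|X_B=x_B], and p*(π(y)) = Pr[Y=y]. -/

import Mathlib

noncomputable section

variable {SA SB S : Type*}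

/-- Joint probability `Pr[X_A = a, X_B = b]` induced by the joint pmf `ν` of `(X_A, X_B, Y)`. -/
def jAB [Fintype S] (ν : SA → SB → S → ℝ) (a : SA) (b : SB) : ℝ := ∑ y, ν a b y

/-- Joint probability `Pr[X_A = a, Y = y]`. -/
def jAY [Fintype SB] (ν : SA → SB → S → ℝ) (a : SA) (y : S) : ℝ := ∑ b, ν a b y

/-- Joint probability `Pr[X_B = b, Y = y]`. -/
def jBY [Fintype SA] (ν : SA → SB → S → ℝ) (b : SB) (y : S) : ℝ := ∑ a, ν a b y

/-- Marginal probability `Pr[X_A = a]`. -/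
def prA [Fintype SB] [Fintype S] (ν : SA → SB → S → ℝ) (a : SA) : ℝ := ∑ b, ∑ y, ν a b y

/-- Marginal probability `Pr[X_B = b]`. -/
def prB [Fintype SA] [Fintype S] (ν : SA → SB → S → ℝ) (b : SB) : ℝ := ∑ a, ∑ y, ν a b y

/-- Marginal probability `Pr[Y = y]`. -/
def prY [Fintype SA] [Fintype SB] (ν : SA → SB → S → ℝ) (y : S) : ℝ := ∑ a, ∑ b, ν a b y

/-- Pointwise mutual information `K(a,b) = Pr[a,b]/(Pr[a]·Pr[b])`. -/
def K [Fintype SA] [Fintype SB] [Fintype S] (ν : SA → SB → S → ℝ) (a : SA) (b : SB) : ℝ :=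
  jAB ν a b / (prA ν a * prB ν b)

/-- Conditional probability `Pr[Y = y | X_A = a]`. -/
def condA [Fintype SB] [Fintype S] (ν : SA → SB → S → ℝ) (a : SA) (y : S) : ℝ :=
  jAY ν a y / prA ν a

/-- Conditional probability `Pr[Y = y | X_B = b]`. -/
def condB [Fintype SA] [Fintype S] (ν : SA → SB → S → ℝ) (b : SB) (y : S) : ℝ :=
  jBY ν b y / prB ν b

/-- `X_A` and `X_B` are conditionally independent given `Y`:
`Pr[a, b | y] = Pr[a | y] · Pr[b | y]` for all `a, b, y`. -/
def CondIndep [Fintype SA] [Fintype SB] (ν : SA → SB → S → ℝ) : Prop :=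
  ∀ a b y, ν a b y / prY ν y = (jAY ν a y / prY ν y) * (jBY ν b y / prY ν y)

/-- `ν` is a probability mass function. -/
def IsPMF [Fintype SA] [Fintype SB] [Fintype S] (ν : SA → SB → S → ℝ) : Prop :=
  (∀ a b y, 0 ≤ ν a b y) ∧ ∑ a, ∑ b, ∑ y, ν a b y = 1

/-- `p` is a probability vector: nonnegative entries summing to `1`. -/
def IsProbVec {T : Type*} [Fintype T] (p : T → ℝ) : Prop := (∀ t, 0 ≤ p t) ∧ ∑ t, p t = 1

/-- The convex conjugate `f*(x) = sup_t (t·x − f(t))`, as a real-valued supremum. -/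
def fconj (f : ℝ → ℝ) (x : ℝ) : ℝ := sSup (Set.range fun t => t * x - f t)

/-- `c` is a subgradient of `f` at `t`: `f(s) ≥ f(t) + c·(s − t)` for all `s`. -/
def IsSubgradientAt (f : ℝ → ℝ) (t c : ℝ) : Prop := ∀ s : ℝ, f t + c * (s - t) ≤ f s

/-- The f-mutual information `MI^f(X_A;X_B) = Σ_{a,b} Pr[a]·Pr[b]·f(K(a,b))`. -/
def MIf [Fintype SA] [Fintype SB] [Fintype S] (f : ℝ → ℝ) (ν : SA → SB → S → ℝ) : ℝ :=
  ∑ a, ∑ b, prA ν a * prB ν b * f (K ν a b)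

/-- The agreement `g(a,b) = Σ_y h_A(a)(y)·h_B(b)(y)/p(y)`. -/
def gagr [Fintype S] (hA : SA → S → ℝ) (hB : SB → S → ℝ) (p : S → ℝ) (a : SA) (b : SB) : ℝ :=
  ∑ y, hA a y * hB b y / p y

/-- Expected `f`-mutual information gain
`MIG^f(h_A,h_B,p) = Σ Pr[a,b]·f'(g(a,b)) − Σ Pr[a]·Pr[b]·f*(f'(g(a,b)))`. -/
def MIG [Fintype SA] [Fintype SB] [Fintype S] (f : ℝ → ℝ) (ν : SA → SB → S → ℝ)
    (hA : SA → S → ℝ) (hB : SB → S → ℝ) (p : S → ℝ) : ℝ :=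
  ∑ a, ∑ b, jAB ν a b * deriv f (gagr hA hB p a b)
    - ∑ a, ∑ b, prA ν a * prB ν b * fconj f (deriv f (gagr hA hB p a b))

/-- Each agent's expected payment in the multi-task common ground mechanism `MCG(f)`. -/
def Pay [Fintype SA] [Fintype SB] [Fintype S] (f : ℝ → ℝ) (ν : SA → SB → S → ℝ)
    (sA : SA → S → ℝ) (sB : SB → S → ℝ) : ℝ :=
  MIG f ν sA sB (prY ν)

/-- `({a^{x_A}}, {b^{x_B}}, r)` is a solution of the agreement system:
probability vectors, `r` strictly positive, with
`Σ_y a^{x_A}(y)·b^{x_B}(y)/r(y) = K(x_A,x_B)` for all `x_A, x_B`. -/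
def AgreementSolution [Fintype SA] [Fintype SB] [Fintype S] (ν : SA → SB → S → ℝ)
    (a : SA → S → ℝ) (b : SB → S → ℝ) (r : S → ℝ) : Prop :=
  (∀ xa, IsProbVec (a xa)) ∧ (∀ xb, IsProbVec (b xb)) ∧ IsProbVec r ∧ (∀ y, 0 < r y) ∧
    ∀ xa xb, (∑ y, a xa y * b xb y / r y) = K ν xa xb

/-- The prior is well-defined: any two solutions of the agreement system coincide
up to a permutation of `Σ`. -/
def WellDefinedPrior [Fintype SA] [Fintype SB] [Fintype S] (ν : SA → SB → S → ℝ) : Prop :=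
  ∀ (a : SA → S → ℝ) (b : SB → S → ℝ) (r : S → ℝ)
    (c : SA → S → ℝ) (d : SB → S → ℝ) (r' : S → ℝ),
    AgreementSolution ν a b r → AgreementSolution ν c d r' →
    ∃ π : Equiv.Perm S, ∀ y, r (π y) = r' y ∧ (∀ xa, a xa (π y) = c xa y)
      ∧ (∀ xb, b xb (π y) = d xb y)

/-- The prior is stable: fixing the truthful `A`-side (resp. `B`-side) of the agreement
system, the only solution for the other side is the truthful one. -/
def StablePrior [Fintype SA] [Fintype SB] [Fintype S] (ν : SA → SB → S → ℝ) : Prop :=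
  (∀ b : SB → S → ℝ, (∀ xb, IsProbVec (b xb)) →
    (∀ xa xb, (∑ y, condA ν xa y * b xb y / prY ν y) = K ν xa xb) →
    ∀ xb y, b xb y = condB ν xb y) ∧
  (∀ a : SA → S → ℝ, (∀ xa, IsProbVec (a xa)) →
    (∀ xa xb, (∑ y, a xa y * condB ν xb y / prY ν y) = K ν xa xb) →
    ∀ xa y, a xa y = condA ν xa y)

/-- Tangent line inequality for a convex differentiable function. -/
lemma tangent_le {f : ℝ → ℝ} (hconv : ConvexOn ℝ Set.univ f) (hdiff : Differentiable ℝ f)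
    (t s : ℝ) : f t + deriv f t * (s - t) ≤ f s := by
  rcases lt_trichotomy t s with h | h | h
  · have := hconv.deriv_le_slope (Set.mem_univ t) (Set.mem_univ s) h (hdiff t)
    rw [slope_def_field] at this
    have hst : (0:ℝ) < s - t := by linarith
    nlinarith [(le_div_iff₀ hst).1 this]
  · simp [h]
  · have := hconv.slope_le_deriv (Set.mem_univ s) (Set.mem_univ t) h (hdiff t)
    rw [slope_def_field] at this
    have hst : (0:ℝ) < t - s := by linarith
    nlinarith [(div_le_iff₀ hst).1 this]

/-- Equality in the tangent inequality forces equal points, when `deriv f` is injective. -/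
lemma eq_of_tangent_eq {f : ℝ → ℝ} (hconv : ConvexOn ℝ Set.univ f)
    (hdiff : Differentiable ℝ f) (hinj : Function.Injective (deriv f))
    {t s : ℝ} (heq : f s = f t + deriv f t * (s - t)) : s = t := by
  set m := (t + s) / 2 with hm
  set φ : ℝ → ℝ := fun x => f x - (f t + deriv f t * (x - t)) with hφ
  have hφnonneg : ∀ x, 0 ≤ φ x := fun x => by
    have := tangent_le hconv hdiff t x; simp [hφ]; linarith
  have hφm : φ m = 0 := by
    have hc := hconv.2 (Set.mem_univ t) (Set.mem_univ s)
      (by norm_num : (0:ℝ) ≤ 1/2) (by norm_num : (0:ℝ) ≤ 1/2) (by norm_num)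
    simp only [smul_eq_mul] at hc
    have hmeq : (1/2 : ℝ) * t + (1/2 : ℝ) * s = m := by rw [hm]; ring
    rw [hmeq] at hc
    have h1 : φ m ≤ 0 := by simp only [hφ]; rw [hm] at *; nlinarith
    exact le_antisymm h1 (hφnonneg m)
  have hmin : IsLocalMin φ m :=
    Filter.Eventually.of_forall fun x => by rw [hφm]; exact hφnonneg x
  have hd : HasDerivAt φ (deriv f m - deriv f t) m := by
    have h1 : HasDerivAt f (deriv f m) m := (hdiff m).hasDerivAt
    have h2 : HasDerivAt (fun x => f t + deriv f t * (x - t)) (deriv f t) m := by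
      simpa using ((hasDerivAt_id m).sub_const t |>.const_mul (deriv f t)).const_add (f t)
    exact h1.sub h2
  have hz : deriv f m - deriv f t = 0 := hmin.hasDerivAt_eq_zero hd
  have : m = t := hinj (by linarith [hz] : deriv f m = deriv f t)
  rw [hm] at this; linarith

/-- Theorem 4.3 (Maximizer → permuted ground truth): under conditional independence,
a well-defined prior, and a differentiable convex `f` with injective derivative, any
maximizer `(h_A*, h_B*, p*)` of the expected `f`-mutual information gain is a permuted
version of the Bayesian posterior predictors and the prior of `Y`. -/
theorem stmt_5 [Fintype SA] [Fintype SB] [Fintype S] [Nonempty SA] [Nonempty SB] [Nonempty S]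
    (ν : SA → SB → S → ℝ) (hν : IsPMF ν)
    (hA : ∀ a, 0 < prA ν a) (hB : ∀ b, 0 < prB ν b) (hY : ∀ y, 0 < prY ν y)
    (hci : CondIndep ν) (hwd : WellDefinedPrior ν)
    (f : ℝ → ℝ) (hconv : ConvexOn ℝ Set.univ f) (hdiff : Differentiable ℝ f) (hf1 : f 1 = 0)
    (hconj : ∀ t : ℝ, fconj f (deriv f t) = t * deriv f t - f t)
    (hinj : Function.Injective (deriv f))
    (hA' : SA → S → ℝ) (hB' : SB → S → ℝ) (p : S → ℝ)
    (hhA : ∀ a, IsProbVec (hA' a)) (hhB : ∀ b, IsProbVec (hB' b))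
    (hp : IsProbVec p) (hppos : ∀ y, 0 < p y)
    (hmax : MIG f ν hA' hB' p = MIf f ν) :
    ∃ π : Equiv.Perm S, ∀ (a : SA) (b : SB) (y : S),
      hA' a (π y) = condA ν a y ∧ hB' b (π y) = condB ν b y ∧ p (π y) = prY ν y := by
  have hKj : ∀ a b, jAB ν a b = prA ν a * prB ν b * K ν a b := by
    intro a b
    rw [K, mul_div_cancel₀ _ (mul_pos (hA a) (hB b)).ne']
  -- The gap MIf - MIG is a double sum of nonnegative terms
  have hgap : MIf f ν - MIG f ν hA' hB' p
      = ∑ a, ∑ b, prA ν a * prB ν b *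
        (f (K ν a b) - (f (gagr hA' hB' p a b)
          + deriv f (gagr hA' hB' p a b) * (K ν a b - gagr hA' hB' p a b))) := by
    simp only [MIf, MIG, sub_sub_eq_add_sub, ← Finset.sum_add_distrib, ← Finset.sum_sub_distrib]
    refine Finset.sum_congr rfl fun a _ => Finset.sum_congr rfl fun b _ => ?_
    rw [hconj, hKj]; ring
  have hsum0 : ∑ a, ∑ b, prA ν a * prB ν b *
      (f (K ν a b) - (f (gagr hA' hB' p a b)
        + deriv f (gagr hA' hB' p a b) * (K ν a b - gagr hA' hB' p a b))) = 0 := by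
    rw [← hgap, hmax, sub_self]
  have hnn : ∀ a b, 0 ≤ prA ν a * prB ν b *
      (f (K ν a b) - (f (gagr hA' hB' p a b)
        + deriv f (gagr hA' hB' p a b) * (K ν a b - gagr hA' hB' p a b))) := by
    intro a b
    have := tangent_le hconv hdiff (gagr hA' hB' p a b) (K ν a b)
    have hpos : 0 < prA ν a * prB ν b := mul_pos (hA a) (hB b)
    nlinarith
  have hzero : ∀ a b, prA ν a * prB ν b *
      (f (K ν a b) - (f (gagr hA' hB' p a b)
        + deriv f (gagr hA' hB' p a b) * (K ν a b - gagr hA' hB' p a b))) = 0 := by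
    intro a b
    have h1 := (Finset.sum_eq_zero_iff_of_nonneg
      (fun a _ => Finset.sum_nonneg fun b _ => hnn a b)).1 hsum0 a (Finset.mem_univ a)
    exact (Finset.sum_eq_zero_iff_of_nonneg (fun b _ => hnn a b)).1 h1 b (Finset.mem_univ b)
  have key : ∀ a b, gagr hA' hB' p a b = K ν a b := by
    intro a b
    have hpos : prA ν a * prB ν b ≠ 0 := (mul_pos (hA a) (hB b)).ne'
    have h2 : f (K ν a b) = f (gagr hA' hB' p a b)
        + deriv f (gagr hA' hB' p a b) * (K ν a b - gagr hA' hB' p a b) := by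
      have := hzero a b
      rcases mul_eq_zero.1 this with h | h
      · exact absurd h hpos
      · linarith [sub_eq_zero.1 h]
    exact (eq_of_tangent_eq hconv hdiff hinj h2).symm
  -- The maximizer is a solution of the agreement system
  have sol1 : AgreementSolution ν hA' hB' p :=
    ⟨hhA, hhB, hp, hppos, fun a b => key a b⟩
  -- The ground truth is a solution of the agreement system
  have hν' : ∀ a b y, ν a b y = jAY ν a y * jBY ν b y / prY ν y := by
    intro a b y
    have h0 := hci a b y
    have : ν a b y = (ν a b y / prY ν y) * prY ν y :=
      (div_mul_cancel₀ _ (hY y).ne').symm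
    rw [this, h0]
    field_simp
  have hcA : ∀ a, IsProbVec (condA ν a) := by
    intro a
    constructor
    · intro y
      exact div_nonneg (Finset.sum_nonneg fun b _ => hν.1 a b y) (hA a).le
    · rw [show (∑ y, condA ν a y) = (∑ y, jAY ν a y) / prA ν a from by
        simp [condA, Finset.sum_div]]
      rw [show (∑ y, jAY ν a y) = prA ν a from by
        simp only [jAY, prA]; exact Finset.sum_comm]
      exact div_self (hA a).ne'
  have hcB : ∀ b, IsProbVec (condB ν b) := by
    intro b
    constructor
    · intro y
      exact div_nonneg (Finset.sum_nonneg fun a _ => hν.1 a b y) (hB b).le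
    · rw [show (∑ y, condB ν b y) = (∑ y, jBY ν b y) / prB ν b from by
        simp [condB, Finset.sum_div]]
      rw [show (∑ y, jBY ν b y) = prB ν b from by
        simp only [jBY, prB]; exact Finset.sum_comm]
      exact div_self (hB b).ne'
  have hprY : IsProbVec (prY ν) := by
    constructor
    · exact fun y => (hY y).le
    · rw [show (∑ y, prY ν y) = ∑ a, ∑ b, ∑ y, ν a b y from by
        simp only [prY]
        rw [Finset.sum_comm]
        exact Finset.sum_congr rfl fun a _ => Finset.sum_comm]
      exact hν.2
  have heqn : ∀ a b, (∑ y, condA ν a y * condB ν b y / prY ν y) = K ν a b := by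
    intro a b
    have : ∀ y, condA ν a y * condB ν b y / prY ν y = ν a b y / (prA ν a * prB ν b) := by
      intro y
      rw [condA, condB, hν' a b y]
      field_simp
    rw [Finset.sum_congr rfl fun y _ => this y, ← Finset.sum_div]
    rfl
  have sol2 : AgreementSolution ν (condA ν) (condB ν) (prY ν) :=
    ⟨hcA, hcB, hprY, hY, heqn⟩
  obtain ⟨π, hπ⟩ := hwd hA' hB' p (condA ν) (condB ν) (prY ν) sol1 sol2
  exact ⟨π, fun a b y => ⟨(hπ y).2.1 a, (hπ y).2.2 b, (hπ y).1⟩⟩
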